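/- With the above notation, the Jacobian of the map g_{(v,z)}(s,t) = (F_v∘γ₁(s) − D_{c(v),a(v,z)}∘F_v∘γ₂(t)) / |F_v∘γ₁(s) − D_{c(v),a(v,z)}∘F_v∘γ₂(t)| satisfies, almost everywhere, |Jac g_{(v,z)}| ≤ a(v,z)·|(F_v∘γ₁)'(s)|·|(F_v∘γ₂)'(t)| / (a(v,z)·|F_v∘γ₁(s) − F_v∘γ₂(t)|² + b(v,z)²). -/

import Mathlib

open Real MeasureTheory
open scoped RealInnerProductSpace

private lemma inv_dist_sq' {E : Type*} [NormedAddCommGroup E] [InnerProductSpace ℝ E]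
    (p q : E) (hp : p ≠ 0) (hq : q ≠ 0) :
    ‖(‖p‖ ^ 2)⁻¹ • p - (‖q‖ ^ 2)⁻¹ • q‖ ^ 2 = ‖p - q‖ ^ 2 / (‖p‖ ^ 2 * ‖q‖ ^ 2) := by
  have hp0 : (0:ℝ) < ‖p‖ ^ 2 := pow_pos (norm_pos_iff.2 hp) 2
  have hq0 : (0:ℝ) < ‖q‖ ^ 2 := pow_pos (norm_pos_iff.2 hq) 2
  rw [@norm_sub_sq_real, norm_smul, norm_smul, real_inner_smul_left, real_inner_smul_right,
    @norm_sub_sq_real E _ _ p q]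
  simp only [Real.norm_eq_abs, abs_of_pos (inv_pos.2 hp0), abs_of_pos (inv_pos.2 hq0)]
  have hip : (⟪p, p⟫ : ℝ) = ‖p‖ ^ 2 := real_inner_self_eq_norm_sq p
  have hiq : (⟪q, q⟫ : ℝ) = ‖q‖ ^ 2 := real_inner_self_eq_norm_sq q
  field_simp
  ring

private lemma sphere_inv' {E : Type*} [NormedAddCommGroup E] [InnerProductSpace ℝ E]
    (p v : E) (hp : p ≠ 0) (hv : ‖v‖ < 1)
    (hrel : ‖p‖ ^ 2 = 1 - 2 * ⟪p, v⟫ - ‖v‖ ^ 2) :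
    ‖(‖p‖ ^ 2)⁻¹ • p - (1 - ‖v‖ ^ 2)⁻¹ • v‖ ^ 2 = ((1 - ‖v‖ ^ 2)⁻¹) ^ 2 := by
  have hp0 : (0:ℝ) < ‖p‖ ^ 2 := pow_pos (norm_pos_iff.2 hp) 2
  have hk0 : (0:ℝ) < 1 - ‖v‖ ^ 2 := by nlinarith [norm_nonneg v]
  rw [@norm_sub_sq_real, norm_smul, norm_smul, real_inner_smul_left, real_inner_smul_right]
  simp only [Real.norm_eq_abs, abs_of_pos (inv_pos.2 hp0), abs_of_pos (inv_pos.2 hk0)]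
  have h1 : ((‖p‖ ^ 2)⁻¹ * ‖p‖) ^ 2 = (‖p‖ ^ 2)⁻¹ := by
    field_simp
  rw [h1]
  have hP0 : (0:ℝ) < 1 - 2 * ⟪p, v⟫ - ‖v‖ ^ 2 := hrel ▸ hp0
  rw [hrel]
  field_simp
  ring

private lemma normalize_bound {E : Type*} [NormedAddCommGroup E] [InnerProductSpace ℝ E]
    (u w : E) (hn : (0:ℝ) < ‖u‖) :
    ‖(‖u‖⁻¹ : ℝ) • w + (-((‖u‖ ^ 3)⁻¹ * ⟪u, w⟫)) • u‖ ≤ ‖u‖⁻¹ * ‖w‖ := by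
  rw [show (⟪u, w⟫:ℝ) = ⟪w, u⟫ from real_inner_comm w u]
  set n := ‖u‖ with hn'
  set I := (⟪w, u⟫ : ℝ) with hI
  have hsq : ‖(n⁻¹ : ℝ) • w + (-((n ^ 3)⁻¹ * I)) • u‖ ^ 2 ≤ (n⁻¹ * ‖w‖) ^ 2 := by
    rw [@norm_add_sq_real, norm_smul, norm_smul, real_inner_smul_left, real_inner_smul_right]
    simp only [Real.norm_eq_abs]
    rw [abs_of_pos (by positivity : (0:ℝ) < n⁻¹)]
    have habs : (|(-((n ^ 3)⁻¹ * I))| * n) ^ 2 = ((n ^ 3)⁻¹ * I) ^ 2 * n ^ 2 := by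
      rw [mul_pow, sq_abs]; ring
    have hkey : 2 * (n⁻¹ * (-((n ^ 3)⁻¹ * I) * I)) + ((n ^ 3)⁻¹ * I) ^ 2 * n ^ 2
        = -(I ^ 2 / n ^ 4) := by
      field_simp; ring
    have hpos : 0 ≤ I ^ 2 / n ^ 4 := by positivity
    rw [habs]
    linarith [hkey]
  have h := Real.sqrt_le_sqrt hsq
  rwa [Real.sqrt_sq (norm_nonneg _), Real.sqrt_sq (by positivity)] at h

private lemma normalize_key {E : Type*} [NormedAddCommGroup E] [InnerProductSpace ℝ E]
    {u : E} (hu : u ≠ 0) :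
    ∃ D : E →L[ℝ] E, HasFDerivAt (fun w : E => ‖w‖⁻¹ • w) D u ∧
      ∀ w, ‖D w‖ ≤ ‖u‖⁻¹ * ‖w‖ := by
  have hn : (0:ℝ) < ‖u‖ := norm_pos_iff.2 hu
  have h1 : HasFDerivAt (fun w : E => ‖w‖ ^ 2) (2 • innerSL ℝ u) u :=
    (hasStrictFDerivAt_norm_sq u).hasFDerivAt
  have h2 : HasFDerivAt (fun w : E => Real.sqrt (‖w‖ ^ 2))
      ((1 / (2 * Real.sqrt (‖u‖ ^ 2))) • (2 • innerSL ℝ u)) u := h1.sqrt (by positivity)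
  have h3 : HasFDerivAt (fun w : E => ‖w‖) ((1 / (2 * ‖u‖)) • (2 • innerSL ℝ u)) u := by
    have hfun : (fun w : E => Real.sqrt (‖w‖ ^ 2)) = fun w : E => ‖w‖ := by
      funext w; rw [Real.sqrt_sq (norm_nonneg w)]
    rw [hfun, Real.sqrt_sq (norm_nonneg u)] at h2; exact h2
  have h4 : HasDerivAt Inv.inv (-(‖u‖ ^ 2)⁻¹) ‖u‖ := hasDerivAt_inv hn.ne'
  have h5 : HasFDerivAt (fun w : E => ‖w‖⁻¹)
      ((-(‖u‖ ^ 2)⁻¹) • ((1 / (2 * ‖u‖)) • (2 • innerSL ℝ u))) u := h4.comp_hasFDerivAt u h3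
  have h6 := h5.smul (hasFDerivAt_id u)
  simp only [id_eq] at h6
  refine ⟨_, h6, fun w => ?_⟩
  have hval : ((‖u‖⁻¹ : ℝ) • ContinuousLinearMap.id ℝ E +
      ((-(‖u‖ ^ 2)⁻¹ : ℝ) • ((1 / (2 * ‖u‖)) • (2 • innerSL ℝ u))).smulRight u) w
      = (‖u‖⁻¹ : ℝ) • w + (-((‖u‖ ^ 3)⁻¹ * ⟪u, w⟫)) • u := by
    simp only [ContinuousLinearMap.add_apply, ContinuousLinearMap.smul_apply,
      ContinuousLinearMap.id_apply, ContinuousLinearMap.smulRight_apply, innerSL_apply_apply,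
      ContinuousLinearMap.coe_smul', Pi.smul_apply, smul_eq_mul]
    congr 2
    field_simp
    ring
  rw [show ((‖u‖⁻¹ : ℝ) • ContinuousLinearMap.id ℝ E +
      ((-(‖u‖ ^ 2)⁻¹ : ℝ) • ((1 / (2 * ‖u‖)) • (2 • innerSL ℝ u))).smulRight u) w
      = (‖u‖⁻¹ : ℝ) • w + (-((‖u‖ ^ 3)⁻¹ * ⟪u, w⟫)) • u from hval]
  exact normalize_bound u w hn

set_option maxHeartbeats 1000000 in
theorem canonical_family_jacobian_bound
    (γ₁ γ₂ : ℝ → EuclideanSpace ℝ (Fin 4)) (K₁ K₂ : NNReal)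
    (h₁ : LipschitzWith K₁ γ₁) (h₂ : LipschitzWith K₂ γ₂)
    (hS₁ : ∀ s, ‖γ₁ s‖ = 1) (hS₂ : ∀ t, ‖γ₂ t‖ = 1)
    (hdisj : ∀ s t, γ₁ s ≠ γ₂ t)
    (v : EuclideanSpace ℝ (Fin 4)) (hv : ‖v‖ < 1)
    (z : ℝ) (hz : z ∈ Set.Ioo (0:ℝ) 1)
    (F : EuclideanSpace ℝ (Fin 4) → EuclideanSpace ℝ (Fin 4))
    (hF : ∀ x, F x = (‖x - v‖ ^ 2)⁻¹ • (x - v))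
    (a b : ℝ) (c : EuclideanSpace ℝ (Fin 4))
    (ha : a = 1 + (1 - ‖v‖ ^ 2) * (2 * z - 1) / ((1 - ‖v‖ ^ 2 + z) * (1 - z)))
    (hb : b = (2 * z - 1) / ((1 - ‖v‖ ^ 2 + z) * (1 - z)))
    (hc : c = (1 - ‖v‖ ^ 2)⁻¹ • v)
    (g : ℝ × ℝ → EuclideanSpace ℝ (Fin 4))
    (hg : ∀ p : ℝ × ℝ, g p =
      ‖F (γ₁ p.1) - (a • (F (γ₂ p.2) - c) + c)‖⁻¹ • (F (γ₁ p.1) - (a • (F (γ₂ p.2) - c) + c))) :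
    ∀ᵐ p : ℝ × ℝ,
      Real.sqrt (‖deriv (fun s => g (s, p.2)) p.1‖ ^ 2 * ‖deriv (fun t => g (p.1, t)) p.2‖ ^ 2
          - ⟪deriv (fun s => g (s, p.2)) p.1, deriv (fun t => g (p.1, t)) p.2⟫ ^ 2)
        ≤ a * ‖deriv (fun s => F (γ₁ s)) p.1‖ * ‖deriv (fun t => F (γ₂ t)) p.2‖
            / (a * ‖F (γ₁ p.1) - F (γ₂ p.2)‖ ^ 2 + b ^ 2) := by
  obtain ⟨hz0, hz1⟩ := hz
  have hv0 : (0:ℝ) ≤ ‖v‖ := norm_nonneg v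
  have hk0 : (0:ℝ) < 1 - ‖v‖ ^ 2 := by nlinarith
  have hδ : (0:ℝ) < 1 - ‖v‖ := by linarith
  have hlow : ∀ x : EuclideanSpace ℝ (Fin 4), ‖x‖ = 1 → 1 - ‖v‖ ≤ ‖x - v‖ := by
    intro x hx
    have := norm_sub_norm_le x v
    rw [hx] at this
    linarith
  have hne : ∀ x : EuclideanSpace ℝ (Fin 4), ‖x‖ = 1 → x - v ≠ 0 := by
    intro x hx h0
    have := hlow x hx
    rw [h0, norm_zero] at this
    linarith
  have hab : a = 1 + (1 - ‖v‖ ^ 2) * b := by rw [ha, hb]; ring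
  have hapos : (0:ℝ) < a := by
    rw [ha]
    have hd : (0:ℝ) < (1 - ‖v‖ ^ 2 + z) * (1 - z) := by nlinarith
    rw [show (1:ℝ) + (1 - ‖v‖ ^ 2) * (2 * z - 1) / ((1 - ‖v‖ ^ 2 + z) * (1 - z))
      = (z * (1 + (1 - ‖v‖ ^ 2) - z)) / ((1 - ‖v‖ ^ 2 + z) * (1 - z)) by
        field_simp; ring]
    apply div_pos _ hd
    nlinarith
  -- Lipschitz continuity of F ∘ γ and a.e. differentiability
  have hlipgen : ∀ (γ : ℝ → EuclideanSpace ℝ (Fin 4)) (K : NNReal), LipschitzWith K γ →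
      (∀ s, ‖γ s‖ = 1) → ∀ᵐ s : ℝ, DifferentiableAt ℝ (fun s => F (γ s)) s := by
    intro γ K h hS
    have hlip : LipschitzWith (⟨((1 - ‖v‖) ^ 2)⁻¹, by positivity⟩ * K) (fun s => F (γ s)) := by
      apply LipschitzWith.of_dist_le_mul
      intro s t
      rw [dist_eq_norm, Real.dist_eq]
      have l1 := hlow _ (hS s)
      have l2 := hlow _ (hS t)
      have a1 : (1 - ‖v‖) ^ 2 ≤ ‖γ s - v‖ ^ 2 := by nlinarith [norm_nonneg (γ s - v)]
      have a2 : (1 - ‖v‖) ^ 2 ≤ ‖γ t - v‖ ^ 2 := by nlinarith [norm_nonneg (γ t - v)]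
      have hPQ : (1 - ‖v‖) ^ 2 * (1 - ‖v‖) ^ 2 ≤ ‖γ s - v‖ ^ 2 * ‖γ t - v‖ ^ 2 :=
        mul_le_mul a1 a2 (by positivity) (by positivity)
      have hd2 : ‖F (γ s) - F (γ t)‖ ^ 2 ≤ (((1 - ‖v‖) ^ 2)⁻¹ * ‖γ s - γ t‖) ^ 2 := by
        calc ‖F (γ s) - F (γ t)‖ ^ 2
            = ‖γ s - γ t‖ ^ 2 / (‖γ s - v‖ ^ 2 * ‖γ t - v‖ ^ 2) := by
              rw [hF, hF, inv_dist_sq' _ _ (hne _ (hS s)) (hne _ (hS t)),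
                show γ s - v - (γ t - v) = γ s - γ t by abel]
          _ ≤ ‖γ s - γ t‖ ^ 2 / ((1 - ‖v‖) ^ 2 * (1 - ‖v‖) ^ 2) := by
              exact div_le_div_of_nonneg_left (by positivity) (by positivity) hPQ
          _ = (((1 - ‖v‖) ^ 2)⁻¹ * ‖γ s - γ t‖) ^ 2 := by
              rw [mul_pow, div_eq_mul_inv, mul_comm]
              congr 1
              rw [← sq, ← inv_pow]
      have hle1 : ‖F (γ s) - F (γ t)‖ ≤ ((1 - ‖v‖) ^ 2)⁻¹ * ‖γ s - γ t‖ := by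
        have := Real.sqrt_le_sqrt hd2
        rwa [Real.sqrt_sq (norm_nonneg _), Real.sqrt_sq (by positivity)] at this
      have hle2 : ‖γ s - γ t‖ ≤ (K : ℝ) * |s - t| := by
        have := h.dist_le_mul s t
        rwa [dist_eq_norm, Real.dist_eq] at this
      calc ‖F (γ s) - F (γ t)‖ ≤ ((1 - ‖v‖) ^ 2)⁻¹ * ‖γ s - γ t‖ := hle1
        _ ≤ ((1 - ‖v‖) ^ 2)⁻¹ * ((K : ℝ) * |s - t|) := by
            exact mul_le_mul_of_nonneg_left hle2 (by positivity)
        _ = ((⟨((1 - ‖v‖) ^ 2)⁻¹, by positivity⟩ * K : NNReal) : ℝ) * |s - t| := by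
            show _ = (((1 - ‖v‖) ^ 2)⁻¹ * (K : ℝ)) * |s - t|
            ring
    exact hlip.ae_differentiableAt (μ := volume)
  have hae1 := hlipgen γ₁ K₁ h₁ hS₁
  have hae2 := hlipgen γ₂ K₂ h₂ hS₂
  have hprod : ∀ᵐ p : ℝ × ℝ, DifferentiableAt ℝ (fun s => F (γ₁ s)) p.1 ∧
      DifferentiableAt ℝ (fun t => F (γ₂ t)) p.2 := by
    rw [Measure.volume_eq_prod]
    have hh1 : (volume.prod volume) {p : ℝ × ℝ | ¬ DifferentiableAt ℝ (fun s => F (γ₁ s)) p.1}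
        = 0 := by
      have he : {p : ℝ × ℝ | ¬ DifferentiableAt ℝ (fun s => F (γ₁ s)) p.1}
          = {s | ¬ DifferentiableAt ℝ (fun s => F (γ₁ s)) s} ×ˢ (Set.univ : Set ℝ) := by
        ext p; simp
      rw [he, Measure.prod_prod, ae_iff.1 hae1, zero_mul]
    have hh2 : (volume.prod volume) {p : ℝ × ℝ | ¬ DifferentiableAt ℝ (fun t => F (γ₂ t)) p.2}
        = 0 := by
      have he : {p : ℝ × ℝ | ¬ DifferentiableAt ℝ (fun t => F (γ₂ t)) p.2}
          = (Set.univ : Set ℝ) ×ˢ {t | ¬ DifferentiableAt ℝ (fun t => F (γ₂ t)) t} := by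
        ext p; simp
      rw [he, Measure.prod_prod, ae_iff.1 hae2, mul_zero]
    rw [ae_iff]
    refine measure_mono_null ?_ (measure_union_null hh1 hh2)
    intro p hp
    simp only [Set.mem_setOf_eq, Set.mem_union] at hp ⊢
    tauto
  filter_upwards [hprod] with p hp
  obtain ⟨hd1, hd2⟩ := hp
  obtain ⟨s, t⟩ := p
  dsimp only at hd1 hd2 ⊢
  have hx1 : ‖γ₁ s‖ = 1 := hS₁ s
  have hy1 : ‖γ₂ t‖ = 1 := hS₂ t
  have hrel : ∀ x : EuclideanSpace ℝ (Fin 4), ‖x‖ = 1 →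
      ‖x - v‖ ^ 2 = 1 - 2 * ⟪x - v, v⟫ - ‖v‖ ^ 2 := by
    intro x hx
    have e1 : ‖x - v‖ ^ 2 = ‖x‖ ^ 2 - 2 * ⟪x, v⟫ + ‖v‖ ^ 2 := norm_sub_sq_real x v
    have e2 : (⟪x - v, v⟫ : ℝ) = ⟪x, v⟫ - ‖v‖ ^ 2 := by
      rw [inner_sub_left, real_inner_self_eq_norm_sq]
    rw [e1, e2, hx]; ring
  have hr1 : ‖F (γ₁ s) - c‖ ^ 2 = ((1 - ‖v‖ ^ 2)⁻¹) ^ 2 := by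
    rw [hF, hc]; exact sphere_inv' _ v (hne _ hx1) hv (hrel _ hx1)
  have hr2 : ‖F (γ₂ t) - c‖ ^ 2 = ((1 - ‖v‖ ^ 2)⁻¹) ^ 2 := by
    rw [hF, hc]; exact sphere_inv' _ v (hne _ hy1) hv (hrel _ hy1)
  have hFd : ‖F (γ₁ s) - F (γ₂ t)‖ ^ 2
      = ‖γ₁ s - γ₂ t‖ ^ 2 / (‖γ₁ s - v‖ ^ 2 * ‖γ₂ t - v‖ ^ 2) := by
    rw [hF, hF, inv_dist_sq' _ _ (hne _ hx1) (hne _ hy1),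
      show γ₁ s - v - (γ₂ t - v) = γ₁ s - γ₂ t by abel]
  have hFxy : (0:ℝ) < ‖F (γ₁ s) - F (γ₂ t)‖ ^ 2 := by
    rw [hFd]
    exact div_pos (pow_pos (norm_pos_iff.2 (sub_ne_zero.2 (hdisj s t))) 2)
      (mul_pos (pow_pos (norm_pos_iff.2 (hne _ hx1)) 2)
        (pow_pos (norm_pos_iff.2 (hne _ hy1)) 2))
  set u : EuclideanSpace ℝ (Fin 4) := F (γ₁ s) - (a • (F (γ₂ t) - c) + c) with hu
  have hudecomp : u = (F (γ₁ s) - c) - a • (F (γ₂ t) - c) := by rw [hu]; abel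
  have hu2 : ‖u‖ ^ 2 = a * ‖F (γ₁ s) - F (γ₂ t)‖ ^ 2 + b ^ 2 := by
    have e1 : ‖u‖ ^ 2 = ‖F (γ₁ s) - c‖ ^ 2 - 2 * (a * ⟪F (γ₁ s) - c, F (γ₂ t) - c⟫)
        + a ^ 2 * ‖F (γ₂ t) - c‖ ^ 2 := by
      rw [hudecomp, @norm_sub_sq_real, real_inner_smul_right, norm_smul]
      simp only [Real.norm_eq_abs]
      rw [mul_pow, sq_abs]
    have e2 : ‖F (γ₁ s) - F (γ₂ t)‖ ^ 2 = ‖F (γ₁ s) - c‖ ^ 2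
        - 2 * ⟪F (γ₁ s) - c, F (γ₂ t) - c⟫ + ‖F (γ₂ t) - c‖ ^ 2 := by
      rw [show F (γ₁ s) - F (γ₂ t) = (F (γ₁ s) - c) - (F (γ₂ t) - c) by abel,
        @norm_sub_sq_real]
    rw [e1, e2, hr1, hr2, hab]
    field_simp
    ring
  have hu2pos : (0:ℝ) < ‖u‖ ^ 2 := by
    rw [hu2]
    nlinarith [sq_nonneg b, mul_pos hapos hFxy]
  have hu0 : u ≠ 0 := by
    intro h
    rw [h, norm_zero] at hu2pos
    simp at hu2pos
  have hupos : (0:ℝ) < ‖u‖ := norm_pos_iff.2 hu0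
  obtain ⟨D, hD, hDb⟩ := normalize_key hu0
  -- partial derivative in s
  have hA : HasDerivAt (fun s' => F (γ₁ s')) (deriv (fun s' => F (γ₁ s')) s) s := hd1.hasDerivAt
  have hm1 : HasDerivAt (fun s' => F (γ₁ s') - (a • (F (γ₂ t) - c) + c))
      (deriv (fun s' => F (γ₁ s')) s) s := hA.sub_const _
  have hg1 : HasDerivAt (fun s' => g (s', t)) (D (deriv (fun s' => F (γ₁ s')) s)) s := by
    have hfe : (fun s' => g (s', t)) = (fun w : EuclideanSpace ℝ (Fin 4) => ‖w‖⁻¹ • w) ∘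
        (fun s' => F (γ₁ s') - (a • (F (γ₂ t) - c) + c)) := by
      funext s'
      simp only [hg, Function.comp]
    rw [hfe]
    exact hD.comp_hasDerivAt s hm1
  have hn1 : ‖deriv (fun s' => g (s', t)) s‖ ≤ ‖u‖⁻¹ * ‖deriv (fun s' => F (γ₁ s')) s‖ := by
    rw [hg1.deriv]; exact hDb _
  -- partial derivative in t
  have hB : HasDerivAt (fun t' => F (γ₂ t')) (deriv (fun t' => F (γ₂ t')) t) t := hd2.hasDerivAt
  have hm2 : HasDerivAt (fun t' => F (γ₁ s) - (a • (F (γ₂ t') - c) + c))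
      (-(a • deriv (fun t' => F (γ₂ t')) t)) t :=
    (((hB.sub_const c).const_smul a).add_const c).const_sub _
  have hg2 : HasDerivAt (fun t' => g (s, t')) (D (-(a • deriv (fun t' => F (γ₂ t')) t))) t := by
    have hfe : (fun t' => g (s, t')) = (fun w : EuclideanSpace ℝ (Fin 4) => ‖w‖⁻¹ • w) ∘
        (fun t' => F (γ₁ s) - (a • (F (γ₂ t') - c) + c)) := by
      funext t'
      simp only [hg, Function.comp]
    rw [hfe]
    exact hD.comp_hasDerivAt t hm2
  have hn2 : ‖deriv (fun t' => g (s, t')) t‖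
      ≤ ‖u‖⁻¹ * (a * ‖deriv (fun t' => F (γ₂ t')) t‖) := by
    rw [hg2.deriv]
    refine le_trans (hDb _) ?_
    rw [norm_neg, norm_smul, Real.norm_eq_abs, abs_of_pos hapos]
  -- conclude
  have hfin1 : Real.sqrt (‖deriv (fun s' => g (s', t)) s‖ ^ 2 * ‖deriv (fun t' => g (s, t')) t‖ ^ 2
      - ⟪deriv (fun s' => g (s', t)) s, deriv (fun t' => g (s, t')) t⟫ ^ 2)
      ≤ ‖deriv (fun s' => g (s', t)) s‖ * ‖deriv (fun t' => g (s, t')) t‖ := by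
    have hle : ‖deriv (fun s' => g (s', t)) s‖ ^ 2 * ‖deriv (fun t' => g (s, t')) t‖ ^ 2
        - ⟪deriv (fun s' => g (s', t)) s, deriv (fun t' => g (s, t')) t⟫ ^ 2
        ≤ (‖deriv (fun s' => g (s', t)) s‖ * ‖deriv (fun t' => g (s, t')) t‖) ^ 2 := by
      nlinarith [sq_nonneg (⟪deriv (fun s' => g (s', t)) s, deriv (fun t' => g (s, t')) t⟫ : ℝ)]
    have h := Real.sqrt_le_sqrt hle
    rwa [Real.sqrt_sq (by positivity)] at h
  have hfin2 : ‖deriv (fun s' => g (s', t)) s‖ * ‖deriv (fun t' => g (s, t')) t‖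
      ≤ (‖u‖⁻¹ * ‖deriv (fun s' => F (γ₁ s')) s‖)
        * (‖u‖⁻¹ * (a * ‖deriv (fun t' => F (γ₂ t')) t‖)) :=
    mul_le_mul hn1 hn2 (norm_nonneg _) (by positivity)
  have hrhs : a * ‖deriv (fun s' => F (γ₁ s')) s‖ * ‖deriv (fun t' => F (γ₂ t')) t‖
      / (a * ‖F (γ₁ s) - F (γ₂ t)‖ ^ 2 + b ^ 2)
      = (‖u‖⁻¹ * ‖deriv (fun s' => F (γ₁ s')) s‖)
        * (‖u‖⁻¹ * (a * ‖deriv (fun t' => F (γ₂ t')) t‖)) := by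
    rw [← hu2]
    field_simp
  calc Real.sqrt (‖deriv (fun s' => g (s', t)) s‖ ^ 2 * ‖deriv (fun t' => g (s, t')) t‖ ^ 2
      - ⟪deriv (fun s' => g (s', t)) s, deriv (fun t' => g (s, t')) t⟫ ^ 2)
      ≤ ‖deriv (fun s' => g (s', t)) s‖ * ‖deriv (fun t' => g (s, t')) t‖ := hfin1
    _ ≤ (‖u‖⁻¹ * ‖deriv (fun s' => F (γ₁ s')) s‖)
        * (‖u‖⁻¹ * (a * ‖deriv (fun t' => F (γ₂ t')) t‖)) := hfin2
    _ = a * ‖deriv (fun s' => F (γ₁ s')) s‖ * ‖deriv (fun t' => F (γ₂ t')) t‖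
        / (a * ‖F (γ₁ s) - F (γ₂ t)‖ ^ 2 + b ^ 2) := hrhs.symm
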